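/- arXiv:1606.02845 — 2 statements merged into one kernel-verified Lean document; each statement's English description precedes it below -/
import Mathlib

section
/- Let f(x) = ∫₀ˣ √(1−τ)/(1+τ) dτ and let C = ∫₀¹ √(1−τ)/(1+τ) dτ. Then for all n ∈ ℕ, ∫₀¹ xⁿ f(x) dx = [ (1 + (−1)ⁿ)·C + (−1)ⁿ·( 6 + 8·Σ_{i=1}^{n} (−4)ⁱ / C(2i,i) ) ] / (n+1) − 4(5+4n)·4ⁿ / ( (2n+1)(2n+3)·C(2n,n) ), where C(2i,i) denotes the central binomial coefficient (2i choose i). -/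
open MeasureTheory Real intervalIntegral

private lemma Pint : ∀ k : ℕ, ∫ t in (0:ℝ)..1, t^2*(1-t^2)^k
    = 4^k/((2*(k:ℝ)+1)*(2*(k:ℝ)+3)*(Nat.centralBinom k : ℝ)) := by
  intro k
  induction k with
  | zero => simp [integral_pow]; norm_num
  | succ k ih =>
    have hcont : ∀ m : ℕ, Continuous (fun t : ℝ => t^2*(1-t^2)^m) := by
      intro m; continuity
    have key : ∫ t in (0:ℝ)..1,
        ((2*(k:ℝ)+5)*(t^2*(1-t^2)^(k+1)) - (2*(k:ℝ)+2)*(t^2*(1-t^2)^k)) = 0 := by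
      have hd : ∀ x ∈ Set.uIcc (0:ℝ) 1, HasDerivAt (fun t : ℝ => t^3*(1-t^2)^(k+1))
          ((2*(k:ℝ)+5)*(x^2*(1-x^2)^(k+1)) - (2*(k:ℝ)+2)*(x^2*(1-x^2)^k)) x := by
        intro x _
        have h1 : HasDerivAt (fun t : ℝ => t^3) (3*x^2) x := by
          simpa using (hasDerivAt_pow 3 x)
        have h2 : HasDerivAt (fun t : ℝ => (1-t^2)^(k+1))
            (((k:ℝ)+1)*(1-x^2)^k * (-(2*x))) x := by
          have hb : HasDerivAt (fun t : ℝ => 1-t^2) (-(2*x)) x := by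
            simpa using ((hasDerivAt_pow 2 x).const_sub 1)
          have := (hasDerivAt_pow (k+1) (1-x^2)).comp x hb
          simpa [Function.comp_def, mul_comm, mul_assoc, mul_left_comm] using this
        have := h1.mul h2
        refine this.congr_deriv ?_
        push_cast
        ring
      have := integral_eq_sub_of_hasDerivAt hd
        (by apply Continuous.intervalIntegrable; continuity)
      rw [this]; norm_num
    have hsplit : ∫ t in (0:ℝ)..1,
        ((2*(k:ℝ)+5)*(t^2*(1-t^2)^(k+1)) - (2*(k:ℝ)+2)*(t^2*(1-t^2)^k))
        = (2*(k:ℝ)+5)*(∫ t in (0:ℝ)..1, t^2*(1-t^2)^(k+1))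
          - (2*(k:ℝ)+2)*(∫ t in (0:ℝ)..1, t^2*(1-t^2)^k) := by
      rw [integral_sub (((hcont (k+1)).intervalIntegrable _ _).const_mul _)
          (((hcont k).intervalIntegrable _ _).const_mul _),
        intervalIntegral.integral_const_mul, intervalIntegral.integral_const_mul]
    rw [hsplit] at key
    have hP : (∫ t in (0:ℝ)..1, t^2*(1-t^2)^(k+1))
        = (2*(k:ℝ)+2)/(2*(k:ℝ)+5) * (∫ t in (0:ℝ)..1, t^2*(1-t^2)^k) := by
      have h5 : (2*(k:ℝ)+5) ≠ 0 := by positivity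
      field_simp at key ⊢
      linarith [key]
    rw [hP, ih]
    have hrel : ((k:ℝ)+1) * (Nat.centralBinom (k+1) : ℝ)
        = 2*(2*(k:ℝ)+1) * (Nat.centralBinom k : ℝ) := by
      exact_mod_cast Nat.succ_mul_centralBinom_succ k
    have hcb : (Nat.centralBinom k : ℝ) ≠ 0 := by
      exact_mod_cast Nat.centralBinom_ne_zero k
    have hcb' : (Nat.centralBinom (k+1) : ℝ) ≠ 0 := by
      exact_mod_cast Nat.centralBinom_ne_zero (k+1)
    have h1 : (2*(k:ℝ)+1) ≠ 0 := by positivity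
    have h3 : (2*(k:ℝ)+3) ≠ 0 := by positivity
    have h5 : (2*(k:ℝ)+5) ≠ 0 := by positivity
    push_cast
    field_simp
    linear_combination 2*4^k*(2*(k:ℝ)+3)*(2*(k:ℝ)+5)*hrel

private lemma Jint (k : ℕ) : ∫ x in (0:ℝ)..1, x^k * Real.sqrt (1-x)
    = 2 * (4^k/((2*(k:ℝ)+1)*(2*(k:ℝ)+3)*(Nat.centralBinom k : ℝ))) := by
  have hf : Continuous (fun u : ℝ => u^k * Real.sqrt (1-u)) :=
    (continuous_pow k).mul (Real.continuous_sqrt.comp (by continuity))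
  have hsub := intervalIntegral.integral_comp_smul_deriv (a := (1:ℝ)) (b := 0)
    (g := fun u : ℝ => u^k * Real.sqrt (1-u)) (f := fun t : ℝ => 1 - t^2)
    (f' := fun t : ℝ => -(2*t))
    (fun x _ => by simpa using ((hasDerivAt_pow 2 x).const_sub 1)) (Continuous.continuousOn (by continuity)) hf
  simp only [one_pow] at hsub
  norm_num at hsub
  -- hsub should now relate ∫ x in 1..0, ... = ∫ u in 0..1, u^k * sqrt (1-u)
  rw [← hsub, intervalIntegral.integral_symm, neg_neg]
  have hcg : Set.EqOn (fun x : ℝ => 2 * x * ((1-x^2)^k * Real.sqrt (x^2)))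
      (fun x : ℝ => 2*(x^2*(1-x^2)^k)) (Set.uIcc (0:ℝ) 1) := by
    intro x hx
    rw [Set.uIcc_of_le (by norm_num)] at hx
    have hx0 : 0 ≤ x := hx.1
    simp only [Real.sqrt_sq hx0]
    ring
  rw [intervalIntegral.integral_congr hcg, intervalIntegral.integral_const_mul, Pint k]

private lemma GcontOn : ContinuousOn (fun τ : ℝ => Real.sqrt (1-τ)/(1+τ)) (Set.Ioi (-1:ℝ)) := by
  intro x hx
  simp only [Set.mem_Ioi] at hx
  have hx' : (0:ℝ) < 1 + x := by linarith
  exact (((Real.continuous_sqrt.comp (by continuity)).continuousAt.div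
    ((continuous_const.add continuous_id).continuousAt) hx'.ne')).continuousWithinAt

private lemma GintOn {a b : ℝ} (ha : 0 ≤ a) (hb : 0 ≤ b) :
    IntervalIntegrable (fun τ : ℝ => Real.sqrt (1-τ)/(1+τ)) volume a b := by
  apply ContinuousOn.intervalIntegrable
  apply GcontOn.mono
  intro x hx
  rcases Set.mem_uIcc.mp hx with h | h
  · exact lt_of_lt_of_le (by linarith) h.1
  · exact lt_of_lt_of_le (by linarith) h.1

private lemma XGint (m : ℕ) : IntervalIntegrable
    (fun x : ℝ => x^m * (Real.sqrt (1-x)/(1+x))) volume 0 1 := by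
  apply ContinuousOn.intervalIntegrable
  apply ContinuousOn.mul (Continuous.continuousOn (by continuity))
  apply GcontOn.mono
  intro x hx
  rcases Set.mem_uIcc.mp hx with h | h
  · exact lt_of_lt_of_le (by linarith) h.1
  · exact lt_of_lt_of_le (by linarith) h.1

private lemma Irec (m : ℕ) : ∫ x in (0:ℝ)..1, x^(m+1) * (Real.sqrt (1-x)/(1+x))
    = (∫ x in (0:ℝ)..1, x^m * Real.sqrt (1-x))
      - ∫ x in (0:ℝ)..1, x^m * (Real.sqrt (1-x)/(1+x)) := by
  have hcg : Set.EqOn (fun x : ℝ => x^(m+1) * (Real.sqrt (1-x)/(1+x)))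
      (fun x : ℝ => x^m * Real.sqrt (1-x) - x^m * (Real.sqrt (1-x)/(1+x)))
      (Set.uIcc (0:ℝ) 1) := by
    intro x hx
    rw [Set.uIcc_of_le (by norm_num)] at hx
    have h1 : (1:ℝ) + x ≠ 0 := by have := hx.1; positivity
    field_simp
    ring
  rw [intervalIntegral.integral_congr hcg,
    intervalIntegral.integral_sub (Continuous.intervalIntegrable (by continuity) _ _) (XGint m)]

private lemma Iform (C : ℝ) (hC : C = ∫ τ in (0:ℝ)..1, Real.sqrt (1-τ)/(1+τ)) :
    ∀ n : ℕ, ∫ x in (0:ℝ)..1, x^(n+1) * (Real.sqrt (1-x)/(1+x))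
    = -(-1:ℝ)^n * C
      - (-1:ℝ)^n * (6 + 8 * ∑ i ∈ Finset.Icc 1 n, (-4:ℝ)^i / (Nat.centralBinom i : ℝ))
      + ((n:ℝ)+1) * (4*(5+4*(n:ℝ))*4^n/((2*(n:ℝ)+1)*(2*(n:ℝ)+3)*(Nat.centralBinom n : ℝ))) := by
  intro n
  induction n with
  | zero =>
    have h0 : ∫ x in (0:ℝ)..1, x^0 * (Real.sqrt (1-x)/(1+x)) = C := by
      rw [hC]; congr 1; funext x; simp
    rw [Irec 0, h0, Jint 0]
    norm_num [Nat.centralBinom]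
    ring
  | succ n ih =>
    rw [Irec (n+1), ih, Jint (n+1)]
    rw [Finset.sum_Icc_succ_top (by omega : 1 ≤ n + 1)]
    have hrel : ((n:ℝ)+1) * (Nat.centralBinom (n+1) : ℝ)
        = 2*(2*(n:ℝ)+1) * (Nat.centralBinom n : ℝ) := by
      exact_mod_cast Nat.succ_mul_centralBinom_succ n
    have hcb : (Nat.centralBinom n : ℝ) ≠ 0 := by
      exact_mod_cast Nat.centralBinom_ne_zero n
    have hcb' : (Nat.centralBinom (n+1) : ℝ) ≠ 0 := by
      exact_mod_cast Nat.centralBinom_ne_zero (n+1)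
    have h1 : (2*(n:ℝ)+1) ≠ 0 := by positivity
    have h3 : (2*(n:ℝ)+3) ≠ 0 := by positivity
    have h5 : (2*(n:ℝ)+5) ≠ 0 := by positivity
    have hn1 : ((n:ℝ)+1) ≠ 0 := by positivity
    have hcbS : ((Nat.centralBinom (n+1) : ℕ) : ℝ)
        = 2*(2*(n:ℝ)+1)*(Nat.centralBinom n : ℝ)/((n:ℝ)+1) := by
      field_simp
      linarith [hrel]
    have hm4 : ((-4:ℝ))^n = (-1)^n * 4^n := by
      rw [neg_pow]
    push_cast [hcbS]
    simp only [pow_succ, hm4]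
    rcases Nat.even_or_odd n with hpar | hpar
    · simp only [hpar.neg_one_pow]
      field_simp
      ring
    · simp only [hpar.neg_one_pow]
      field_simp
      ring

/-- Closed form of the Mellin transform of `f(x) = ∫₀ˣ √(1−τ)/(1+τ) dτ`. -/
theorem mellin_closed_form_int_sqrt (f : ℝ → ℝ) (C : ℝ)
    (hf : ∀ x : ℝ, f x = ∫ τ in (0:ℝ)..x, Real.sqrt (1 - τ) / (1 + τ))
    (hC : C = ∫ τ in (0:ℝ)..1, Real.sqrt (1 - τ) / (1 + τ)) :
    ∀ n : ℕ,
      ∫ x in (0:ℝ)..1, x ^ n * f x =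
        ((1 + (-1 : ℝ) ^ n) * C +
            (-1 : ℝ) ^ n *
              (6 + 8 * ∑ i ∈ Finset.Icc 1 n,
                (-4 : ℝ) ^ i / (Nat.choose (2 * i) i : ℝ))) / ((n : ℝ) + 1) -
          4 * (5 + 4 * (n : ℝ)) * (4 : ℝ) ^ n /
            ((2 * (n : ℝ) + 1) * (2 * (n : ℝ) + 3) * (Nat.choose (2 * n) n : ℝ)) := by
  intro n
  set G : ℝ → ℝ := fun τ => Real.sqrt (1-τ)/(1+τ) with hG
  have hGm : AEStronglyMeasurable G volume := by
    apply Measurable.aestronglyMeasurable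
    exact (Real.continuous_sqrt.comp (by continuity)).measurable.div
      (continuous_const.add continuous_id).measurable
  have hu : ∀ x ∈ Set.uIcc (0:ℝ) 1, HasDerivAt f (G x) x := by
    intro x hx
    rw [Set.uIcc_of_le (by norm_num)] at hx
    have hfe : f = fun y => ∫ τ in (0:ℝ)..y, G τ := funext hf
    rw [hfe]
    exact intervalIntegral.integral_hasDerivAt_right (GintOn le_rfl hx.1)
      (hGm.stronglyMeasurableAtFilter)
      ((GcontOn.continuousAt (Ioi_mem_nhds (by linarith [hx.1]))))
  have hv : ∀ x ∈ Set.uIcc (0:ℝ) 1,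
      HasDerivAt (fun y : ℝ => y^(n+1)/((n:ℝ)+1)) (x^n) x := by
    intro x _
    have h := (hasDerivAt_pow (n+1) x).div_const (((n:ℝ))+1)
    refine h.congr_deriv ?_
    have : ((n:ℝ)+1) ≠ 0 := by positivity
    push_cast
    field_simp
  have hparts := intervalIntegral.integral_mul_deriv_eq_deriv_mul hu hv
    (GintOn le_rfl zero_le_one)
    (Continuous.intervalIntegrable (by continuity) _ _)
  have hswap : ∫ x in (0:ℝ)..1, x ^ n * f x = ∫ x in (0:ℝ)..1, f x * x ^ n := by
    congr 1; funext x; ring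
  have hf1 : f 1 = C := by rw [hf 1, hC]
  have hf0 : f 0 = 0 := by rw [hf 0, intervalIntegral.integral_same]
  have hlast : ∫ x in (0:ℝ)..1, G x * (x^(n+1)/((n:ℝ)+1))
      = (1/((n:ℝ)+1)) * ∫ x in (0:ℝ)..1, x^(n+1) * G x := by
    rw [← intervalIntegral.integral_const_mul]
    congr 1; funext x; ring
  rw [hswap, hparts, hf1, hf0, hlast, Iform C hC n]
  have hn1 : ((n:ℝ)+1) ≠ 0 := by positivity
  have hcb : (Nat.centralBinom n : ℝ) ≠ 0 := by
    exact_mod_cast Nat.centralBinom_ne_zero n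
  have h1 : (2*(n:ℝ)+1) ≠ 0 := by positivity
  have h3 : (2*(n:ℝ)+3) ≠ 0 := by positivity
  have hcbe : ∀ m : ℕ, (Nat.choose (2*m) m : ℝ) = (Nat.centralBinom m : ℝ) := fun m => rfl
  simp only [hcbe]
  field_simp
  ring
end

section
/- Define f_n = Σ_{i=1}^{n} ((−1)ⁱ/i)·Σ_{j=1}^{i} 1/(2ʲ·j) for n ∈ ℕ. Then for all n ∈ ℕ, f_n = −(1/(−2)ⁿ)·∫₀¹ xⁿ·log(2−x)/(2+x) dx + (−1)ⁿ·log(2)·∫₀¹ xⁿ/(1+x) dx + (6·log(2)² − π²)/12 + Li₂(1/4), where Li₂(1/4) = Σ_{k=1}^{∞} (1/4)ᵏ/k². -/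
open MeasureTheory Real Filter Set intervalIntegral Topology



noncomputable def L2 (x : ℝ) : ℝ := ∑' k : ℕ, x ^ (k + 1) / ((k : ℝ) + 1) ^ 2

noncomputable def gg (x : ℝ) : ℝ := ∑' k : ℕ, x ^ k / ((k : ℝ) + 1)

lemma summable_inv_sq : Summable (fun k : ℕ => 1 / ((k : ℝ) + 1) ^ 2) := by
  have h := Real.summable_one_div_nat_pow.2 (le_refl 2)
  have := (summable_nat_add_iff 1).2 h
  apply this.congr
  intro k; push_cast; ring

lemma L2_term_bound {x : ℝ} (h : |x| ≤ 1) (k : ℕ) :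
    ‖x ^ (k + 1) / ((k : ℝ) + 1) ^ 2‖ ≤ 1 / ((k : ℝ) + 1) ^ 2 := by
  have hk : (0:ℝ) < ((k : ℝ) + 1) ^ 2 := by positivity
  rw [norm_div, norm_pow, Real.norm_eq_abs, Real.norm_eq_abs, abs_of_pos hk]
  have : |x| ^ (k+1) ≤ 1 := pow_le_one₀ (abs_nonneg x) h
  exact (div_le_div_of_nonneg_right this hk.le).trans (by simp)

lemma summable_L2 {x : ℝ} (h : |x| ≤ 1) :
    Summable (fun k : ℕ => x ^ (k + 1) / ((k : ℝ) + 1) ^ 2) :=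
  Summable.of_norm_bounded summable_inv_sq (L2_term_bound h)

lemma gg_term_bound {x : ℝ} {b : ℝ} (h : |x| ≤ b) (k : ℕ) :
    ‖x ^ k / ((k : ℝ) + 1)‖ ≤ b ^ k := by
  have hb : (0:ℝ) ≤ b := (abs_nonneg x).trans h
  rw [norm_div, norm_pow, Real.norm_eq_abs, Real.norm_eq_abs]
  have h1 : (1:ℝ) ≤ |(k:ℝ) + 1| := by
    rw [abs_of_pos (by positivity)]; simp
  calc |x| ^ k / |(k:ℝ)+1| ≤ |x| ^ k / 1 :=
        div_le_div_of_nonneg_left (by positivity) one_pos h1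
    _ = |x| ^ k := div_one _
    _ ≤ b ^ k := pow_le_pow_left₀ (abs_nonneg x) h k

lemma summable_gg {x : ℝ} (h : |x| < 1) :
    Summable (fun k : ℕ => x ^ k / ((k : ℝ) + 1)) :=
  Summable.of_norm_bounded (summable_geometric_of_lt_one (abs_nonneg x) h)
    (gg_term_bound (le_refl _))

lemma mul_gg {x : ℝ} (h : |x| < 1) : x * gg x = -Real.log (1 - x) := by
  rw [gg, ← tsum_mul_left, ← (hasSum_pow_div_log_of_abs_lt_one h).tsum_eq]
  congr 1; funext k; rw [pow_succ]; push_cast; ring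

lemma gg_eq {x : ℝ} (hx : x ≠ 0) (h : |x| < 1) : gg x = -Real.log (1 - x) / x := by
  rw [← mul_gg h]; field_simp

lemma gg_zero : gg 0 = 1 := by
  rw [gg, tsum_eq_single 0 (fun k hk => by simp [zero_pow hk])]
  simp

lemma L2_zero : L2 0 = 0 := by simp [L2]

lemma L2_one : L2 1 = π ^ 2 / 6 := by
  rw [L2, ← hasSum_zeta_two.tsum_eq,
    tsum_eq_zero_add' (f := fun n : ℕ => (1:ℝ) / (n:ℝ) ^ 2) (by simpa using summable_inv_sq)]
  simp

lemma continuousOn_L2 : ContinuousOn L2 (Icc (-1 : ℝ) 1) := by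
  apply (tendstoUniformlyOn_tsum summable_inv_sq
    (fun k x hx => L2_term_bound (abs_le.2 ⟨hx.1, hx.2⟩) k)).continuousOn
  refine Frequently.of_forall fun t => ?_
  exact continuousOn_finset_sum t fun k _ => ((continuous_pow (k+1)).div_const _).continuousOn

lemma continuousOn_gg {b : ℝ} (hb0 : 0 ≤ b) (hb : b < 1) :
    ContinuousOn gg (Icc (-b : ℝ) b) := by
  apply (tendstoUniformlyOn_tsum (summable_geometric_of_lt_one hb0 hb)
    (fun k x hx => gg_term_bound (abs_le.2 ⟨hx.1, hx.2⟩) k)).continuousOn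
  refine Frequently.of_forall fun t => ?_
  exact continuousOn_finset_sum t fun k _ => ((continuous_pow k).div_const _).continuousOn

lemma continuousAt_gg {x : ℝ} (h : |x| < 1) : ContinuousAt gg x := by
  set b := (|x| + 1) / 2 with hbdef
  have hxb : |x| < b := by rw [hbdef]; linarith
  have hb0 : 0 ≤ b := by positivity
  have hb1 : b < 1 := by rw [hbdef]; linarith
  refine (continuousOn_gg hb0 hb1).continuousAt (Icc_mem_nhds ?_ ?_) <;>
    [linarith [neg_abs_le x]; linarith [le_abs_self x]]

lemma continuousAt_L2 {x : ℝ} (h : |x| < 1) : ContinuousAt L2 x := by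
  refine continuousOn_L2.continuousAt (Icc_mem_nhds ?_ ?_) <;>
    [linarith [neg_abs_le x]; linarith [le_abs_self x]]

lemma L2_eq_integral {x : ℝ} (hx0 : 0 ≤ x) (hx1 : x < 1) :
    L2 x = ∫ t in (0:ℝ)..x, gg t := by
  have hmeas : MeasurableSet (Ioc (0:ℝ) x) := measurableSet_Ioc
  rw [intervalIntegral.integral_of_le hx0]
  have key : ∑' k : ℕ, (∫ t in Ioc (0:ℝ) x, t ^ k / ((k:ℝ)+1)) =
      ∫ t in Ioc (0:ℝ) x, (∑' k : ℕ, t ^ k / ((k:ℝ)+1)) := by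
    apply MeasureTheory.integral_tsum_of_summable_integral_norm
    · intro k
      exact ((continuous_pow k).div_const _).integrableOn_Ioc
    · apply Summable.of_nonneg_of_le (fun k => integral_nonneg ?_) (fun k => ?_) summable_inv_sq
      · intro t; positivity
      · have : (∫ t in Ioc (0:ℝ) x, ‖t ^ k / ((k:ℝ)+1)‖) =
            ∫ t in (0:ℝ)..x, ‖t ^ k / ((k:ℝ)+1)‖ := (intervalIntegral.integral_of_le hx0).symm
        rw [this]
        have heq : ∀ t ∈ Set.uIcc (0:ℝ) x, ‖t ^ k / ((k:ℝ)+1)‖ = t ^ k / ((k:ℝ)+1) := by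
          intro t ht
          rw [Set.uIcc_of_le hx0] at ht
          have h0 : (0:ℝ) ≤ t := ht.1
          rw [Real.norm_eq_abs, abs_of_nonneg (by positivity)]
        rw [intervalIntegral.integral_congr heq]
        rw [intervalIntegral.integral_div, integral_pow]
        have hk : (0:ℝ) < (k:ℝ) + 1 := by positivity
        rw [zero_pow (by omega), sub_zero]
        rw [div_div, ← sq]
        have hx1' : x ^ (k+1) ≤ 1 := pow_le_one₀ hx0 hx1.le
        exact div_le_div_of_nonneg_right hx1' (by positivity)
  simp only [L2]
  calc (∑' k : ℕ, x ^ (k + 1) / ((k : ℝ) + 1) ^ 2)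
      = ∑' k : ℕ, (∫ t in Ioc (0:ℝ) x, t ^ k / ((k:ℝ)+1)) := by
        congr 1; funext k
        rw [← intervalIntegral.integral_of_le hx0, intervalIntegral.integral_div, integral_pow,
          zero_pow (by omega), sub_zero, div_div, sq]
    _ = ∫ t in Ioc (0:ℝ) x, (∑' k : ℕ, t ^ k / ((k:ℝ)+1)) := key
    _ = ∫ t in Ioc (0:ℝ) x, gg t := by
        apply setIntegral_congr_fun hmeas
        intro t ht
        simp only [gg]

lemma intervalIntegrable_gg {a b : ℝ} (ha : |a| < 1) (hb : |b| < 1) :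
    IntervalIntegrable gg volume a b := by
  set c := max |a| |b| with hc
  have hc1 : c < 1 := max_lt ha hb
  have hc0 : 0 ≤ c := le_trans (abs_nonneg a) (le_max_left _ _)
  apply ContinuousOn.intervalIntegrable
  apply (continuousOn_gg hc0 hc1).mono
  intro t ht
  have h1 : -c ≤ a := by nlinarith [neg_abs_le a, le_max_left |a| |b|]
  have h2 : -c ≤ b := by nlinarith [neg_abs_le b, le_max_right |a| |b|]
  have h3 : a ≤ c := le_trans (le_abs_self a) (le_max_left _ _)
  have h4 : b ≤ c := le_trans (le_abs_self b) (le_max_right _ _)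
  rw [Set.uIcc_eq_union] at ht
  rcases ht with h | h
  · exact ⟨le_trans h1 h.1, le_trans h.2 h4⟩
  · exact ⟨le_trans h2 h.1, le_trans h.2 h3⟩

lemma hasDerivAt_L2 {x : ℝ} (hx : x ∈ Ioo (0:ℝ) 1) : HasDerivAt L2 (gg x) x := by
  obtain ⟨hx0, hx1⟩ := hx
  have habs : |x| < 1 := abs_lt.2 ⟨by linarith, hx1⟩
  have hsub : Icc (x/2) ((x+1)/2) ⊆ Icc (-((x+1)/2)) ((x+1)/2) := by
    intro t ht
    exact ⟨by nlinarith [ht.1], ht.2⟩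
  have hP : HasStrictDerivAt (fun u => ∫ t in (0:ℝ)..u, gg t) (gg x) x := by
    apply intervalIntegral.integral_hasStrictDerivAt_right
      (intervalIntegrable_gg (by norm_num) habs) ?_ (continuousAt_gg habs)
    exact ⟨Icc (x/2) ((x+1)/2), Icc_mem_nhds (by linarith) (by linarith),
      ((continuousOn_gg (by positivity) (by linarith)).mono hsub).aestronglyMeasurable
        measurableSet_Icc⟩
  apply hP.hasDerivAt.congr_of_eventuallyEq
  filter_upwards [Ioo_mem_nhds hx0 hx1] with y hy
  exact L2_eq_integral hy.1.le hy.2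


lemma L2_half : L2 (1/2) = π ^ 2 / 12 - Real.log 2 ^ 2 / 2 := by
  set F : ℝ → ℝ := fun x => L2 x + L2 (1 - x) + Real.log x * Real.log (1 - x) with hF
  have hderiv : ∀ x ∈ Ioo (0:ℝ) (1/2:ℝ), HasDerivAt F 0 x := by
    intro x hx
    obtain ⟨hx0, hx2⟩ := hx
    have hx1 : x < 1 := by linarith
    have h1x : (1 - x) ∈ Ioo (0:ℝ) 1 := ⟨by linarith, by linarith⟩
    have d1 : HasDerivAt L2 (gg x) x := hasDerivAt_L2 ⟨hx0, hx1⟩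
    have d2 : HasDerivAt (fun y : ℝ => L2 (1 - y)) (-gg (1 - x)) x := by
      have := (hasDerivAt_L2 h1x).comp x ((hasDerivAt_id x).const_sub 1)
      simpa [Function.comp_def] using this
    have d3 : HasDerivAt (fun y : ℝ => Real.log y * Real.log (1 - y))
        (x⁻¹ * Real.log (1 - x) + Real.log x * -(1 - x)⁻¹) x := by
      apply HasDerivAt.mul (Real.hasDerivAt_log (ne_of_gt hx0))
      have := (Real.hasDerivAt_log (ne_of_gt h1x.1)).comp x ((hasDerivAt_id x).const_sub 1)
      simpa [Function.comp_def] using this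
    have : HasDerivAt F (gg x + -gg (1 - x) +
        (x⁻¹ * Real.log (1 - x) + Real.log x * -(1 - x)⁻¹)) x := (d1.add d2).add d3
    convert this using 1
    rw [gg_eq (ne_of_gt hx0) (abs_lt.2 ⟨by linarith, hx1⟩),
      gg_eq (ne_of_gt h1x.1) (abs_lt.2 ⟨by linarith, h1x.2⟩)]
    have : (1:ℝ) - (1 - x) = x := by ring
    rw [this]
    field_simp
    ring
  have ha : Tendsto F (𝓝[>] (0:ℝ)) (𝓝 (π ^ 2 / 6)) := by
    have t1 : Tendsto L2 (𝓝[>] (0:ℝ)) (𝓝 0) := by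
      have := ((continuousAt_L2 (by norm_num : |(0:ℝ)| < 1)).tendsto).mono_left
        (nhdsWithin_le_nhds (s := Ioi (0:ℝ)))
      rwa [L2_zero] at this
    have t2 : Tendsto (fun x : ℝ => L2 (1 - x)) (𝓝[>] (0:ℝ)) (𝓝 (π ^ 2 / 6)) := by
      rw [← L2_one]
      apply (continuousOn_L2 1 (by norm_num : (1:ℝ) ∈ Icc (-1:ℝ) 1)).tendsto.comp
      apply tendsto_nhdsWithin_of_tendsto_nhds_of_eventually_within
      · have hcont : Continuous (fun x : ℝ => 1 - x) := continuous_const.sub continuous_id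
        have : Tendsto (fun x : ℝ => 1 - x) (𝓝 (0:ℝ)) (𝓝 1) := by
          simpa using hcont.tendsto 0
        exact this.mono_left nhdsWithin_le_nhds
      · filter_upwards [Ioo_mem_nhdsGT_of_mem (by norm_num : (0:ℝ) ∈ Ico (0:ℝ) 1)] with x hx
        exact ⟨by linarith [hx.2], by linarith [hx.1]⟩
    have t3 : Tendsto (fun x : ℝ => Real.log x * Real.log (1 - x)) (𝓝[>] (0:ℝ)) (𝓝 0) := by
      have hxx : Tendsto (fun x : ℝ => Real.log x * x) (𝓝[>] (0:ℝ)) (𝓝 0) := by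
        have := tendsto_log_mul_rpow_nhdsGT_zero (one_pos)
        apply this.congr'
        filter_upwards [self_mem_nhdsWithin] with x hx
        rw [Real.rpow_one]
      have hgg : Tendsto (fun x : ℝ => gg x) (𝓝[>] (0:ℝ)) (𝓝 1) := by
        rw [← gg_zero]
        exact ((continuousAt_gg (by norm_num)).tendsto).mono_left nhdsWithin_le_nhds
      have := (hxx.mul hgg).neg
      norm_num at this
      apply this.congr'
      filter_upwards [Ioo_mem_nhdsGT_of_mem (by norm_num : (0:ℝ) ∈ Ico (0:ℝ) 1)] with x hx
      have habs : |x| < 1 := abs_lt.2 ⟨by linarith [hx.1], hx.2⟩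
      have hlog : Real.log (1 - x) = -(x * gg x) := by
        rw [mul_gg habs]; ring
      rw [hlog]; ring
    have := (t1.add t2).add t3
    simpa using this
  have hb : Tendsto F (𝓝[<] (1/2:ℝ)) (𝓝 (F (1/2))) := by
    apply ContinuousAt.continuousWithinAt ?_ |>.tendsto
    have c1 : ContinuousAt L2 (1/2 : ℝ) := continuousAt_L2 (by rw [abs_of_pos] <;> norm_num)
    have c2 : ContinuousAt (fun x : ℝ => L2 (1 - x)) (1/2 : ℝ) := by
      have h2 : ContinuousAt L2 ((fun x : ℝ => 1 - x) (1/2)) := by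
        norm_num
        exact continuousAt_L2 (by rw [abs_of_pos] <;> norm_num)
      exact h2.comp ((continuous_const.sub continuous_id).continuousAt)
    have c3 : ContinuousAt (fun x : ℝ => Real.log x * Real.log (1 - x)) (1/2 : ℝ) := by
      apply ContinuousAt.mul
      · exact Real.continuousAt_log (by norm_num)
      · have h2 : ContinuousAt Real.log ((fun x : ℝ => 1 - x) (1/2)) :=
          Real.continuousAt_log (by norm_num)
        exact h2.comp ((continuous_const.sub continuous_id).continuousAt)
    exact (c1.add c2).add c3
  have key := intervalIntegral.integral_eq_sub_of_hasDerivAt_of_tendsto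
    (by norm_num : (0:ℝ) < 1/2) hderiv
    (_root_.intervalIntegrable_const (c := (0:ℝ))) ha hb
  rw [intervalIntegral.integral_const, smul_zero] at key
  have hF2 : F (1/2) = 2 * L2 (1/2) + Real.log 2 ^ 2 := by
    rw [hF]
    norm_num
    rw [Real.log_div (by norm_num) (by norm_num), Real.log_one]
    ring
  rw [hF2] at key
  linarith [key]

lemma integral_log_one_sub_half :
    (∫ u in (1/2:ℝ)..1, Real.log (1 - u/2) / u) = L2 (1/4) - L2 (1/2) := by
  have hcong : ∀ u ∈ Set.uIcc (1/2:ℝ) 1, Real.log (1 - u/2) / u = -gg (u/2) / 2 := by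
    intro u hu
    rw [Set.uIcc_of_le (by norm_num)] at hu
    have hu1 : (1/2:ℝ) ≤ u := hu.1
    have hu2 : u ≤ 1 := hu.2
    have habs : |u/2| < 1 := by rw [abs_of_pos (by linarith)]; linarith
    have hlog : Real.log (1 - u/2) = -((u/2) * gg (u/2)) := by rw [mul_gg habs]; ring
    rw [hlog]
    field_simp
  rw [intervalIntegral.integral_congr hcong]
  have hderiv : ∀ u ∈ Set.uIcc (1/2:ℝ) 1, HasDerivAt (fun y : ℝ => -L2 (y/2)) (-gg (u/2) / 2) u := by
    intro u hu
    rw [Set.uIcc_of_le (by norm_num)] at hu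
    have h2 : (u/2) ∈ Ioo (0:ℝ) 1 := ⟨by linarith [hu.1], by linarith [hu.2]⟩
    have := ((hasDerivAt_L2 h2).comp u ((hasDerivAt_id u).div_const 2)).neg
    convert this using 1
    rfl
    rfl
    rfl
    ring
  have hint : IntervalIntegrable (fun u : ℝ => -gg (u/2) / 2) volume (1/2) 1 := by
    apply ContinuousOn.intervalIntegrable
    have hc : ContinuousOn (fun u : ℝ => gg (u/2)) (Set.uIcc (1/2:ℝ) 1) := by
      apply (continuousOn_gg (by norm_num : (0:ℝ) ≤ 3/4) (by norm_num)).comp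
        (continuousOn_id.div_const 2)
      intro u hu
      rw [Set.uIcc_of_le (by norm_num)] at hu
      exact ⟨by simp only [id]; linarith [hu.1], by simp only [id]; linarith [hu.2]⟩
    exact (hc.neg).div_const 2
  have := intervalIntegral.integral_eq_sub_of_hasDerivAt hderiv hint
  rw [this]
  norm_num
  ring

lemma integral_inv_one_add : (∫ x in (0:ℝ)..(1/2:ℝ), (1 + x)⁻¹) = Real.log (3/2) := by
  have := intervalIntegral.integral_comp_add_left (a := (0:ℝ)) (b := (1/2:ℝ))
    (fun u : ℝ => u⁻¹) 1
  rw [this]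
  norm_num

lemma cont_log_one_sub : ContinuousOn (fun x : ℝ => Real.log (1 - x)) (Set.Icc (0:ℝ) (1/2)) := by
  intro x hx
  apply ContinuousAt.continuousWithinAt
  have h2 : ContinuousAt Real.log ((fun y : ℝ => 1 - y) x) :=
    Real.continuousAt_log (by simp; intro h; linarith [hx.2, h])
  exact h2.comp ((continuous_const.sub continuous_id).continuousAt)

lemma cont_log_one_add : ContinuousOn (fun x : ℝ => Real.log (1 + x)) (Set.Icc (0:ℝ) (1/2)) := by
  intro x hx
  apply ContinuousAt.continuousWithinAt
  have h2 : ContinuousAt Real.log ((fun y : ℝ => 1 + y) x) :=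
    Real.continuousAt_log (by intro h; simp at h; linarith [hx.1])
  exact h2.comp ((continuous_const.add continuous_id).continuousAt)

lemma ibp_K : (∫ x in (0:ℝ)..(1/2:ℝ), Real.log (1 - x) * (1 + x)⁻¹) =
    -Real.log 2 * Real.log (3/2) + ∫ x in (0:ℝ)..(1/2:ℝ), Real.log (1 + x) * (1 - x)⁻¹ := by
  have hu : ∀ x ∈ Set.uIcc (0:ℝ) (1/2:ℝ),
      HasDerivAt (fun y : ℝ => Real.log (1 - y)) (-(1 - x)⁻¹) x := by
    intro x hx
    rw [Set.uIcc_of_le (by norm_num)] at hx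
    have h1 : (1:ℝ) - x ≠ 0 := by intro h; have := hx.2; norm_num at this ⊢; linarith
    have := (Real.hasDerivAt_log h1).comp x ((hasDerivAt_id x).const_sub 1)
    simpa [Function.comp_def] using this
  have hv : ∀ x ∈ Set.uIcc (0:ℝ) (1/2:ℝ),
      HasDerivAt (fun y : ℝ => Real.log (1 + y)) ((1 + x)⁻¹) x := by
    intro x hx
    rw [Set.uIcc_of_le (by norm_num)] at hx
    have h1 : (1:ℝ) + x ≠ 0 := by have := hx.1; intro h; linarith
    have := (Real.hasDerivAt_log h1).comp x ((hasDerivAt_id x).const_add 1)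
    simpa [Function.comp_def] using this
  have hu' : IntervalIntegrable (fun x : ℝ => -(1 - x)⁻¹) volume 0 (1/2) := by
    apply ContinuousOn.intervalIntegrable
    rw [Set.uIcc_of_le (by norm_num)]
    intro x hx
    apply ContinuousAt.continuousWithinAt
    have h1 : (1:ℝ) - x ≠ 0 := by intro h; have := hx.2; norm_num at this ⊢; linarith
    exact (((continuous_const.sub continuous_id).continuousAt).inv₀ (by simpa using h1)).neg
  have hv' : IntervalIntegrable (fun x : ℝ => (1 + x)⁻¹) volume 0 (1/2) := by
    apply ContinuousOn.intervalIntegrable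
    rw [Set.uIcc_of_le (by norm_num)]
    intro x hx
    apply ContinuousAt.continuousWithinAt
    have h1 : (1:ℝ) + x ≠ 0 := by have := hx.1; intro h; linarith
    exact ((continuous_const.add continuous_id).continuousAt).inv₀ (by simpa using h1)
  have := intervalIntegral.integral_mul_deriv_eq_deriv_mul hu hv hu' hv'
  rw [this]
  norm_num
  rw [show Real.log (1/2) = -Real.log 2 by rw [one_div, Real.log_inv]]
  have hcomm : (∫ x in (0:ℝ)..(1/2:ℝ), (1 - x)⁻¹ * Real.log (1 + x))
      = ∫ x in (0:ℝ)..(1/2:ℝ), Real.log (1 + x) * (1 - x)⁻¹ := by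
    apply intervalIntegral.integral_congr
    intro x hx
    ring
  rw [hcomm]
  ring

lemma cont_integrand_M : ContinuousOn (fun u : ℝ => Real.log (1 - u/2) / u)
    (Set.Icc (1/2:ℝ) 1) := by
  intro u hu
  apply ContinuousAt.continuousWithinAt
  have h1 : (1:ℝ) - u/2 ≠ 0 := by intro h; have := hu.2; linarith
  have hu0 : u ≠ 0 := by intro h; have := hu.1; rw [h] at this; linarith
  have h3 : Continuous (fun y : ℝ => 1 - y/2) := by continuity
  exact (h3.continuousAt.log h1).div continuousAt_id hu0

lemma M_eq : (∫ x in (0:ℝ)..(1/2:ℝ), Real.log (1 + x) * (1 - x)⁻¹) =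
    Real.log 2 * Real.log 2 + (L2 (1/4) - L2 (1/2)) := by
  have hsub := intervalIntegral.integral_comp_sub_left (a := (0:ℝ)) (b := (1/2:ℝ))
    (fun u : ℝ => Real.log (2 - u) / u) 1
  have hlhs : (∫ x in (0:ℝ)..(1/2:ℝ), Real.log (1 + x) * (1 - x)⁻¹)
      = ∫ x in (0:ℝ)..(1/2:ℝ), Real.log (2 - (1 - x)) / (1 - x) := by
    apply intervalIntegral.integral_congr
    intro x hx
    show Real.log (1 + x) * (1 - x)⁻¹ = Real.log (2 - (1 - x)) / (1 - x)
    rw [show (2:ℝ) - (1 - x) = 1 + x by ring, div_eq_mul_inv]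
  rw [hlhs, hsub]
  norm_num
  have hsplit : ∀ u ∈ Set.uIcc (1/2:ℝ) 1,
      Real.log (2 - u) / u = Real.log 2 * u⁻¹ + Real.log (1 - u/2) / u := by
    intro u hu
    rw [Set.uIcc_of_le (by norm_num)] at hu
    have h1 : (1:ℝ) - u/2 ≠ 0 := by intro h; have := hu.2; linarith
    have hu0 : u ≠ 0 := by intro h; have := hu.1; rw [h] at this; linarith
    rw [show (2:ℝ) - u = 2 * (1 - u/2) by ring, Real.log_mul (by norm_num) h1]
    field_simp
  rw [intervalIntegral.integral_congr hsplit]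
  have hi1 : IntervalIntegrable (fun u : ℝ => Real.log 2 * u⁻¹) volume (1/2) 1 := by
    apply ContinuousOn.intervalIntegrable
    rw [Set.uIcc_of_le (by norm_num)]
    intro u hu
    apply ContinuousAt.continuousWithinAt
    have hu0 : u ≠ 0 := by intro h; have := hu.1; rw [h] at this; linarith
    exact continuousAt_const.mul (continuousAt_id.inv₀ hu0)
  have hi2 : IntervalIntegrable (fun u : ℝ => Real.log (1 - u/2) / u) volume (1/2) 1 := by
    apply ContinuousOn.intervalIntegrable
    rw [Set.uIcc_of_le (by norm_num)]
    exact cont_integrand_M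
  rw [intervalIntegral.integral_add hi1 hi2, intervalIntegral.integral_const_mul,
    integral_inv (by rw [Set.uIcc_of_le] <;> norm_num), integral_log_one_sub_half]
  norm_num

lemma A0 : (∫ x in (0:ℝ)..1, Real.log (2 - x) / (2 + x)) =
    3/2 * Real.log 2 ^ 2 - π ^ 2 / 12 + L2 (1/4) := by
  have hsub := intervalIntegral.integral_comp_mul_left (a := (0:ℝ)) (b := (1/2:ℝ))
    (f := fun y : ℝ => Real.log (2 - y) / (2 + y)) (c := 2) (by norm_num)
  norm_num at hsub
  -- hsub : ∫ x in 0..1/2, log (2 - 2x) / (2 + 2x) = 2⁻¹ • ∫ y in 0..1, log (2 - y)/(2 + y)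
  have hmain : (∫ x in (0:ℝ)..(1/2:ℝ), Real.log (2 - 2*x) / (2 + 2*x))
      = (Real.log 2 * Real.log (3/2)
        + ∫ x in (0:ℝ)..(1/2:ℝ), Real.log (1 - x) * (1 + x)⁻¹) / 2 := by
    have hcong : ∀ x ∈ Set.uIcc (0:ℝ) (1/2:ℝ), Real.log (2 - 2*x) / (2 + 2*x)
        = (Real.log 2 * (1 + x)⁻¹ + Real.log (1 - x) * (1 + x)⁻¹) / 2 := by
      intro x hx
      rw [Set.uIcc_of_le (by norm_num)] at hx
      have h1 : (1:ℝ) - x ≠ 0 := by intro h; have := hx.2; norm_num at this ⊢; linarith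
      have h2 : (1:ℝ) + x ≠ 0 := by have := hx.1; intro h; linarith
      have h3 : (2:ℝ) + 2*x ≠ 0 := by intro h; have := hx.1; linarith
      rw [show (2:ℝ) - 2*x = 2 * (1 - x) by ring, Real.log_mul (by norm_num) h1]
      field_simp
      try ring
      try tauto
    rw [intervalIntegral.integral_congr hcong]
    have hi1 : IntervalIntegrable (fun x : ℝ => Real.log 2 * (1 + x)⁻¹) volume 0 (1/2) := by
      apply ContinuousOn.intervalIntegrable
      rw [Set.uIcc_of_le (by norm_num)]
      intro x hx
      apply ContinuousAt.continuousWithinAt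
      have h2 : (1:ℝ) + x ≠ 0 := by have := hx.1; intro h; linarith
      exact continuousAt_const.mul (((continuous_const.add continuous_id).continuousAt).inv₀
        (by simpa using h2))
    have hi2 : IntervalIntegrable (fun x : ℝ => Real.log (1 - x) * (1 + x)⁻¹) volume 0 (1/2) := by
      apply ContinuousOn.intervalIntegrable
      rw [Set.uIcc_of_le (by norm_num)]
      intro x hx
      have h2 : (1:ℝ) + x ≠ 0 := by have := hx.1; intro h; linarith
      exact (cont_log_one_sub x hx).mul (ContinuousAt.continuousWithinAt
        (((continuous_const.add continuous_id).continuousAt).inv₀ (by simpa using h2)))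
    rw [intervalIntegral.integral_div, intervalIntegral.integral_add hi1 hi2,
      intervalIntegral.integral_const_mul, integral_inv_one_add]
  have hK := ibp_K
  have hM := M_eq
  have hexpand : (∫ x in (0:ℝ)..1, Real.log (2 - x) / (2 + x))
      = 2 * ∫ x in (0:ℝ)..(1/2:ℝ), Real.log (2 - 2*x) / (2 + 2*x) := by
    rw [hsub]; ring
  rw [hexpand, hmain, hK, hM, L2_half]
  ring

noncomputable def An (n : ℕ) : ℝ := ∫ x in (0:ℝ)..1, x ^ n * Real.log (2 - x) / (2 + x)
noncomputable def Bn (n : ℕ) : ℝ := ∫ x in (0:ℝ)..1, x ^ n / (1 + x)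
noncomputable def In (m : ℕ) : ℝ := ∫ x in (0:ℝ)..1, x ^ m / (2 - x)

lemma cont_An (n : ℕ) : ContinuousOn (fun x : ℝ => x ^ n * Real.log (2 - x) / (2 + x))
    (Set.Icc (0:ℝ) 1) := by
  intro x hx
  apply ContinuousAt.continuousWithinAt
  have h1 : (2:ℝ) - x ≠ 0 := by intro h; have := hx.2; linarith
  have h2 : (2:ℝ) + x ≠ 0 := by intro h; have := hx.1; linarith
  exact (((continuous_pow n).continuousAt).mul
    ((continuous_const.sub continuous_id).continuousAt.log h1)).div
    ((continuous_const.add continuous_id).continuousAt) h2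

lemma cont_Bn (n : ℕ) : ContinuousOn (fun x : ℝ => x ^ n / (1 + x)) (Set.Icc (0:ℝ) 1) := by
  intro x hx
  apply ContinuousAt.continuousWithinAt
  have h2 : (1:ℝ) + x ≠ 0 := by intro h; have := hx.1; linarith
  exact ((continuous_pow n).continuousAt).div
    ((continuous_const.add continuous_id).continuousAt) h2

lemma cont_In (m : ℕ) : ContinuousOn (fun x : ℝ => x ^ m / (2 - x)) (Set.Icc (0:ℝ) 1) := by
  intro x hx
  apply ContinuousAt.continuousWithinAt
  have h1 : (2:ℝ) - x ≠ 0 := by intro h; have := hx.2; linarith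
  exact ((continuous_pow m).continuousAt).div
    ((continuous_const.sub continuous_id).continuousAt) h1

lemma int_An (n : ℕ) : IntervalIntegrable (fun x : ℝ => x ^ n * Real.log (2 - x) / (2 + x))
    volume 0 1 :=
  ((cont_An n).mono (by rw [Set.uIcc_of_le] <;> norm_num)).intervalIntegrable

lemma int_Bn (n : ℕ) : IntervalIntegrable (fun x : ℝ => x ^ n / (1 + x)) volume 0 1 :=
  ((cont_Bn n).mono (by rw [Set.uIcc_of_le] <;> norm_num)).intervalIntegrable

lemma int_In (m : ℕ) : IntervalIntegrable (fun x : ℝ => x ^ m / (2 - x)) volume 0 1 :=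
  ((cont_In m).mono (by rw [Set.uIcc_of_le] <;> norm_num)).intervalIntegrable

lemma In_zero : In 0 = Real.log 2 := by
  rw [In]
  have hc : ∀ x ∈ Set.uIcc (0:ℝ) 1, (x:ℝ) ^ 0 / (2 - x) = (fun u : ℝ => u⁻¹) (2 - x) := by
    intro x hx; simp
  rw [intervalIntegral.integral_congr hc,
    intervalIntegral.integral_comp_sub_left (fun u : ℝ => u⁻¹) 2]
  norm_num

lemma In_succ (m : ℕ) : In (m + 1) = 2 * In m - 1 / (m + 1) := by
  have hc : ∀ x ∈ Set.uIcc (0:ℝ) 1, x ^ (m+1) / (2 - x)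
      = 2 * (x ^ m / (2 - x)) - x ^ m := by
    intro x hx
    rw [Set.uIcc_of_le (by norm_num)] at hx
    have h1 : (2:ℝ) - x ≠ 0 := by intro h; have := hx.2; linarith
    field_simp
    ring
  rw [In, intervalIntegral.integral_congr hc,
    intervalIntegral.integral_sub ((int_In m).const_mul 2) (intervalIntegral.intervalIntegrable_pow m),
    intervalIntegral.integral_const_mul, integral_pow]
  rw [In]
  norm_num

lemma In_eq (m : ℕ) :
    In m = 2 ^ m * (Real.log 2 - ∑ j ∈ Finset.Icc 1 m, 1 / (2 ^ j * (j:ℝ))) := by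
  induction m with
  | zero => simp [In_zero]
  | succ m ih =>
    rw [In_succ, ih, Finset.sum_Icc_succ_top (by omega : 1 ≤ m + 1)]
    have h2 : ((2:ℝ)) ^ (m+1) ≠ 0 := by positivity
    push_cast
    rw [pow_succ]
    field_simp
    ring

lemma integral_pow_log (n : ℕ) :
    (∫ x in (0:ℝ)..1, x ^ n * Real.log (2 - x)) = In (n+1) / (n+1) := by
  have hu : ∀ x ∈ Set.uIcc (0:ℝ) 1,
      HasDerivAt (fun y : ℝ => y ^ (n+1) / (n+1)) (x ^ n) x := by
    intro x hx
    have := (hasDerivAt_pow (n+1) x).div_const ((n:ℝ)+1)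
    have hne : ((n:ℝ) + 1) ≠ 0 := by positivity
    convert this using 1
    rfl
    rfl
    push_cast
    field_simp
  have hv : ∀ x ∈ Set.uIcc (0:ℝ) 1,
      HasDerivAt (fun y : ℝ => Real.log (2 - y)) (-(2 - x)⁻¹) x := by
    intro x hx
    rw [Set.uIcc_of_le (by norm_num)] at hx
    have h1 : (2:ℝ) - x ≠ 0 := by intro h; have := hx.2; linarith
    have := (Real.hasDerivAt_log h1).comp x ((hasDerivAt_id x).const_sub 2)
    simpa [Function.comp_def] using this
  have hu' : IntervalIntegrable (fun x : ℝ => x ^ n) volume 0 1 :=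
    intervalIntegral.intervalIntegrable_pow n
  have hv' : IntervalIntegrable (fun x : ℝ => -(2 - x)⁻¹) volume 0 1 := by
    apply ContinuousOn.intervalIntegrable
    intro x hx
    rw [Set.uIcc_of_le (by norm_num)] at hx
    apply ContinuousAt.continuousWithinAt
    have h1 : (2:ℝ) - x ≠ 0 := by intro h; have := hx.2; linarith
    exact (((continuous_const.sub continuous_id).continuousAt).inv₀ (by simpa using h1)).neg
  have key := intervalIntegral.integral_mul_deriv_eq_deriv_mul hv hu
    hv' (by exact hu')
  -- key : ∫ log(2-x) * x^n = [log(2-x) * x^{n+1}/(n+1)] - ∫ -(2-x)⁻¹ * x^{n+1}/(n+1)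
  have hl : (∫ x in (0:ℝ)..1, x ^ n * Real.log (2 - x))
      = ∫ x in (0:ℝ)..1, Real.log (2 - x) * x ^ n := by
    apply intervalIntegral.integral_congr; intro x hx; ring
  have h2 : (∫ x in (0:ℝ)..1, -(2 - x)⁻¹ * (x ^ (n+1) / (n+1)))
      = -(1/((n:ℝ)+1)) * ∫ x in (0:ℝ)..1, x ^ (n+1) / (2 - x) := by
    rw [← intervalIntegral.integral_const_mul]
    apply intervalIntegral.integral_congr
    intro x hx
    rw [Set.uIcc_of_le (by norm_num)] at hx
    have h1 : (2:ℝ) - x ≠ 0 := by intro h; have := hx.2; linarith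
    have hne : ((n:ℝ) + 1) ≠ 0 := by positivity
    field_simp
    try ring
    try tauto
  rw [hl, key, h2, In]
  have e1 : Real.log (2 - 1) = 0 := by norm_num
  have e2 : (0:ℝ) ^ (n+1) = 0 := zero_pow (by omega)
  rw [e1, e2]
  ring

lemma An_succ (n : ℕ) : An (n + 1) = -2 * An n + In (n+1) / (n+1) := by
  have hc : ∀ x ∈ Set.uIcc (0:ℝ) 1, x ^ (n+1) * Real.log (2 - x) / (2 + x)
      = -2 * (x ^ n * Real.log (2 - x) / (2 + x)) + x ^ n * Real.log (2 - x) := by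
    intro x hx
    rw [Set.uIcc_of_le (by norm_num)] at hx
    have h2 : (2:ℝ) + x ≠ 0 := by intro h; have := hx.1; linarith
    field_simp
    ring
  have hint2 : IntervalIntegrable (fun x : ℝ => x ^ n * Real.log (2 - x)) volume 0 1 := by
    apply ContinuousOn.intervalIntegrable
    intro x hx
    rw [Set.uIcc_of_le (by norm_num)] at hx
    apply ContinuousAt.continuousWithinAt
    have h1 : (2:ℝ) - x ≠ 0 := by intro h; have := hx.2; linarith
    exact ((continuous_pow n).continuousAt).mul
      ((continuous_const.sub continuous_id).continuousAt.log h1)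
  rw [An, intervalIntegral.integral_congr hc,
    intervalIntegral.integral_add ((int_An n).const_mul (-2)) hint2,
    intervalIntegral.integral_const_mul, integral_pow_log]
  rw [An]

lemma Bn_succ (n : ℕ) : Bn (n + 1) = -Bn n + 1 / (n+1) := by
  have hc : ∀ x ∈ Set.uIcc (0:ℝ) 1, x ^ (n+1) / (1 + x)
      = (-1) * (x ^ n / (1 + x)) + x ^ n := by
    intro x hx
    rw [Set.uIcc_of_le (by norm_num)] at hx
    have h2 : (1:ℝ) + x ≠ 0 := by intro h; have := hx.1; linarith
    field_simp
    ring
  rw [Bn, intervalIntegral.integral_congr hc,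
    intervalIntegral.integral_add ((int_Bn n).const_mul (-1)) (intervalIntegral.intervalIntegrable_pow n),
    intervalIntegral.integral_const_mul, integral_pow]
  rw [Bn]
  push_cast
  ring

lemma Bn_zero : Bn 0 = Real.log 2 := by
  rw [Bn]
  have hc : ∀ x ∈ Set.uIcc (0:ℝ) 1, (x:ℝ) ^ 0 / (1 + x) = (fun u : ℝ => u⁻¹) (1 + x) := by
    intro x hx; simp
  rw [intervalIntegral.integral_congr hc,
    intervalIntegral.integral_comp_add_left (fun u : ℝ => u⁻¹) 1]
  norm_num

lemma An_zero : An 0 = 3/2 * Real.log 2 ^ 2 - π ^ 2 / 12 + L2 (1/4) := by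
  rw [An, ← A0]
  apply intervalIntegral.integral_congr
  intro x hx
  simp


theorem main_abs (n : ℕ) :
    (∑ i ∈ Finset.Icc 1 n,
        ((-1 : ℝ) ^ i / i) * ∑ j ∈ Finset.Icc 1 i, 1 / (2 ^ j * (j : ℝ))) =
      -(1 / (-2 : ℝ) ^ n) * An n +
        (-1 : ℝ) ^ n * Real.log 2 * Bn n +
        (6 * Real.log 2 ^ 2 - π ^ 2) / 12 + L2 (1/4) := by
  induction n with
  | zero =>
    simp [An_zero, Bn_zero]
    ring
  | succ n ih =>
    rw [Finset.sum_Icc_succ_top (by omega : 1 ≤ n + 1), ih, An_succ, Bn_succ, In_eq (n+1)]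
    have hn1 : ((n:ℝ) + 1) ≠ 0 := by positivity
    have h2n : ((2:ℝ)) ^ n ≠ 0 := by positivity
    have hneg2 : (-2 : ℝ) = (-1) * 2 := by norm_num
    push_cast
    rcases Nat.even_or_odd n with he | ho
    · have e1 : (-1 : ℝ) ^ n = 1 := he.neg_one_pow
      have e2 : (-2 : ℝ) ^ n = 2 ^ n := by rw [hneg2, mul_pow, e1, one_mul]
      simp only [pow_succ, e1, e2]
      field_simp
      ring
    · have e1 : (-1 : ℝ) ^ n = -1 := ho.neg_one_pow
      have e2 : (-2 : ℝ) ^ n = -(2 ^ n) := by rw [hneg2, mul_pow, e1]; ring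
      simp only [pow_succ, e1, e2]
      field_simp
      ring

/-- Inverse Mellin transform representation of
`f_n = Σ_{i=1}^n ((−1)ⁱ/i)·Σ_{j=1}^i 1/(2ʲ·j)`. -/
theorem inverse_mellin_double_sum (n : ℕ) :
    (∑ i ∈ Finset.Icc 1 n,
        ((-1 : ℝ) ^ i / i) * ∑ j ∈ Finset.Icc 1 i, 1 / (2 ^ j * (j : ℝ))) =
      -(1 / (-2 : ℝ) ^ n) *
          (∫ x in (0:ℝ)..1, x ^ n * Real.log (2 - x) / (2 + x)) +
        (-1 : ℝ) ^ n * Real.log 2 * (∫ x in (0:ℝ)..1, x ^ n / (1 + x)) +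
        (6 * Real.log 2 ^ 2 - π ^ 2) / 12 +
        ∑' k : ℕ, (1 / 4 : ℝ) ^ (k + 1) / ((k : ℝ) + 1) ^ 2 := by
  have h := main_abs n
  simp only [An, Bn, L2] at h
  exact h
end
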